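/- Let v : [0, t₀] → ℝ be absolutely continuous (or continuously differentiable) and suppose v attains its minimum over [0, t₀] at the right endpoint t₀ > 0. Then for α ∈ (0,1), the Caputo derivative satisfies ∂_t^α v(t₀) ≤ (v(t₀) - v(0)) / (Γ(1-α) t₀^α). -/

import Mathlib

open Real MeasureTheory intervalIntegral

/-- If a `C¹` function attains its minimum over `[0, t₀]` at the right endpoint,
then its Caputo derivative of order `α ∈ (0,1)` at `t₀` is at most
`(v(t₀) - v(0)) / (Γ(1-α) t₀^α)`. -/
theorem stmt6 (v : ℝ → ℝ) (hv : ContDiff ℝ 1 v)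
    (t₀ : ℝ) (ht₀ : 0 < t₀)
    (hmin : ∀ s ∈ Set.Icc (0 : ℝ) t₀, v t₀ ≤ v s)
    (α : ℝ) (hα : 0 < α) (hα1 : α < 1) :
    (1 / Real.Gamma (1 - α)) * ∫ s in (0 : ℝ)..t₀, (t₀ - s) ^ (-α) * deriv v s
      ≤ (v t₀ - v 0) / (Real.Gamma (1 - α) * t₀ ^ α) := by
  have hΓ : 0 < Real.Gamma (1 - α) := Real.Gamma_pos_of_pos (by linarith)
  have hvd : Differentiable ℝ v := hv.differentiable one_ne_zero
  have hvc : Continuous (deriv v) := hv.continuous_deriv le_rfl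
  -- integrability of the integrand on [0, t₀]
  have hint : IntervalIntegrable (fun s => (t₀ - s) ^ (-α) * deriv v s) volume 0 t₀ := by
    have h1 : IntervalIntegrable (fun x : ℝ => x ^ (-α)) volume t₀ 0 :=
      (intervalIntegrable_rpow' (by linarith)).symm
    have h2 := h1.comp_sub_left t₀
    simp only [sub_self, sub_zero] at h2
    exact h2.mul_continuousOn hvc.continuousOn
  -- key inequality for T < t₀
  have key : ∀ T ∈ Set.Ico (0 : ℝ) t₀,
      (∫ s in (0:ℝ)..T, (t₀ - s) ^ (-α) * deriv v s)
        ≤ (v T - v t₀) * (t₀ - T) ^ (-α) + (v t₀ - v 0) * t₀ ^ (-α) := by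
    intro T hT
    obtain ⟨hT0, hTt⟩ := hT
    have hpos : ∀ s ∈ Set.uIcc (0:ℝ) T, 0 < t₀ - s := by
      intro s hs
      rw [Set.uIcc_of_le hT0] at hs
      have := hs.2; linarith
    -- FTC for G s = (v s - v t₀) * (t₀ - s)^(-α)
    have hderiv : ∀ s ∈ Set.uIcc (0:ℝ) T,
        HasDerivAt (fun u => (v u - v t₀) * (t₀ - u) ^ (-α))
          (deriv v s * (t₀ - s) ^ (-α) + (v s - v t₀) * (α * (t₀ - s) ^ (-α - 1))) s := by
      intro s hs
      have h := hpos s hs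
      have h1 : HasDerivAt (fun x : ℝ => x ^ (-α)) (-α * (t₀ - s) ^ (-α - 1)) (t₀ - s) :=
        Real.hasDerivAt_rpow_const (Or.inl h.ne')
      have h2 : HasDerivAt (fun u : ℝ => t₀ - u) (-1) s := (hasDerivAt_id s).const_sub t₀
      have hrp : HasDerivAt (fun u => (t₀ - u) ^ (-α)) (α * (t₀ - s) ^ (-α - 1)) s := by
        have := h1.comp s h2
        refine this.congr_deriv ?_
        ring
      have hvs : HasDerivAt (fun u => v u - v t₀) (deriv v s) s :=
        ((hvd s).hasDerivAt).sub_const _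
      exact hvs.mul hrp
    have hcont1 : ContinuousOn (fun s : ℝ => (t₀ - s) ^ (-α)) (Set.uIcc 0 T) :=
      ContinuousOn.rpow_const (continuous_const.sub continuous_id).continuousOn
        (fun s hs => Or.inl (hpos s hs).ne')
    have hcont2 : ContinuousOn (fun s : ℝ => (v s - v t₀) * (α * (t₀ - s) ^ (-α - 1)))
        (Set.uIcc 0 T) := by
      apply ContinuousOn.mul ((hv.continuous.sub continuous_const).continuousOn)
      exact continuousOn_const.mul
        (ContinuousOn.rpow_const (continuous_const.sub continuous_id).continuousOn
          (fun s hs => Or.inl (hpos s hs).ne'))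
    have hint1 : IntervalIntegrable
        (fun s => deriv v s * (t₀ - s) ^ (-α) + (v s - v t₀) * (α * (t₀ - s) ^ (-α - 1)))
        volume 0 T :=
      ((hvc.continuousOn.mul hcont1).add hcont2).intervalIntegrable
    have hint2 : IntervalIntegrable (fun s => (v s - v t₀) * (α * (t₀ - s) ^ (-α - 1)))
        volume 0 T := hcont2.intervalIntegrable
    have hftc := intervalIntegral.integral_eq_sub_of_hasDerivAt hderiv hint1
    have hsplit : (∫ s in (0:ℝ)..T, (t₀ - s) ^ (-α) * deriv v s)
        = (∫ s in (0:ℝ)..T, deriv v s * (t₀ - s) ^ (-α)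
            + (v s - v t₀) * (α * (t₀ - s) ^ (-α - 1)))
          - ∫ s in (0:ℝ)..T, (v s - v t₀) * (α * (t₀ - s) ^ (-α - 1)) := by
      rw [← intervalIntegral.integral_sub hint1 hint2]
      congr 1
      ext s
      ring
    have hnn : 0 ≤ ∫ s in (0:ℝ)..T, (v s - v t₀) * (α * (t₀ - s) ^ (-α - 1)) := by
      apply intervalIntegral.integral_nonneg hT0
      intro s hs
      have hsm : s ∈ Set.Icc (0:ℝ) t₀ := ⟨hs.1, le_trans hs.2 hTt.le⟩
      have := hmin s hsm
      have h1 : (0:ℝ) ≤ v s - v t₀ := by linarith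
      have h2 : (0:ℝ) ≤ (t₀ - s) ^ (-α - 1) := Real.rpow_nonneg (by linarith [hsm.2]) _
      positivity
    rw [hsplit, hftc]
    simp only [sub_zero]
    nlinarith [hnn]
  -- limits
  haveI hne : (nhdsWithin t₀ (Set.Ico (0:ℝ) t₀)).NeBot := by
    rw [← mem_closure_iff_nhdsWithin_neBot, closure_Ico ht₀.ne]
    exact Set.right_mem_Icc.2 ht₀.le
  set l := nhdsWithin t₀ (Set.Ico (0:ℝ) t₀) with hl
  have hφ : Filter.Tendsto (fun T => ∫ s in (0:ℝ)..T, (t₀ - s) ^ (-α) * deriv v s) l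
      (nhds (∫ s in (0:ℝ)..t₀, (t₀ - s) ^ (-α) * deriv v s)) := by
    have hc := intervalIntegral.continuousWithinAt_primitive (μ := volume) (a := 0)
      (b₀ := t₀) (b₁ := 0) (b₂ := t₀) (f := fun s => (t₀ - s) ^ (-α) * deriv v s)
      (measure_singleton t₀) (by simpa [min_eq_left ht₀.le, max_eq_right ht₀.le] using hint)
    exact hc.tendsto.mono_left (nhdsWithin_mono t₀ Set.Ico_subset_Icc_self)
  -- bound |v T - v t₀| using a bound on deriv v
  obtain ⟨C, hC⟩ : ∃ C, ∀ x ∈ Set.Icc (0:ℝ) t₀, ‖deriv v x‖ ≤ C :=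
    isCompact_Icc.exists_bound_of_continuousOn hvc.continuousOn
  have hlip : ∀ T ∈ Set.Icc (0:ℝ) t₀, v T - v t₀ ≤ C * (t₀ - T) := by
    intro T hT
    have := (convex_Icc (0:ℝ) t₀).norm_image_sub_le_of_norm_deriv_le
      (fun x _ => hvd x) hC (Set.right_mem_Icc.2 ht₀.le) hT
    rw [Real.norm_eq_abs, Real.norm_eq_abs] at this
    have h1 : v T - v t₀ ≤ |v T - v t₀| := le_abs_self _
    have h2 : |T - t₀| = t₀ - T := by
      rw [abs_sub_comm]; exact abs_of_nonneg (by linarith [hT.2])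
    rw [h2] at this
    linarith
  have h0 : Filter.Tendsto (fun T => (v T - v t₀) * (t₀ - T) ^ (-α)) l (nhds 0) := by
    have hub : Filter.Tendsto (fun T => C * (t₀ - T) ^ (1 - α)) l (nhds 0) := by
      have ht : Filter.Tendsto (fun T : ℝ => t₀ - T) l (nhds 0) := by
        have : Filter.Tendsto (fun T : ℝ => t₀ - T) (nhds t₀) (nhds (t₀ - t₀)) :=
          (continuous_const.sub continuous_id).tendsto t₀
        rw [sub_self] at this
        exact this.mono_left nhdsWithin_le_nhds
      have hr : Filter.Tendsto (fun x : ℝ => x ^ (1 - α)) (nhds 0) (nhds 0) := by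
        have := (Real.continuousAt_rpow_const 0 (1 - α) (Or.inr (by linarith))).tendsto
        simpa [Real.zero_rpow (by linarith : (1:ℝ) - α ≠ 0)] using this
      have := (hr.comp ht).const_mul C
      simpa using this
    refine squeeze_zero' ?_ ?_ hub
    · filter_upwards [eventually_mem_nhdsWithin] with T hT
      have h1 : (0:ℝ) ≤ v T - v t₀ :=
        sub_nonneg.2 (hmin T ⟨hT.1, hT.2.le⟩)
      have h2 : (0:ℝ) ≤ (t₀ - T) ^ (-α) := Real.rpow_nonneg (by linarith [hT.2]) _
      positivity
    · filter_upwards [eventually_mem_nhdsWithin] with T hT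
      have hp : (0:ℝ) < t₀ - T := by linarith [hT.2]
      have h1 : v T - v t₀ ≤ C * (t₀ - T) := hlip T ⟨hT.1, hT.2.le⟩
      have h2 : (0:ℝ) ≤ (t₀ - T) ^ (-α) := Real.rpow_nonneg hp.le _
      have h3 : (v T - v t₀) * (t₀ - T) ^ (-α) ≤ C * (t₀ - T) * (t₀ - T) ^ (-α) :=
        mul_le_mul_of_nonneg_right h1 h2
      have h4 : C * (t₀ - T) * (t₀ - T) ^ (-α) = C * (t₀ - T) ^ (1 - α) := by
        rw [show (1:ℝ) - α = 1 + (-α) by ring, Real.rpow_add hp, Real.rpow_one]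
        ring
      linarith [h3, h4.le]
  have hψ : Filter.Tendsto
      (fun T => (v T - v t₀) * (t₀ - T) ^ (-α) + (v t₀ - v 0) * t₀ ^ (-α)) l
      (nhds ((v t₀ - v 0) * t₀ ^ (-α))) := by
    have := h0.add (tendsto_const_nhds (x := (v t₀ - v 0) * t₀ ^ (-α)) (f := l))
    simpa using this
  have hmain : (∫ s in (0:ℝ)..t₀, (t₀ - s) ^ (-α) * deriv v s)
      ≤ (v t₀ - v 0) * t₀ ^ (-α) := by
    apply le_of_tendsto_of_tendsto hφ hψ
    filter_upwards [eventually_mem_nhdsWithin] with T hT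
    exact key T hT
  have heq : (1 / Real.Gamma (1 - α)) * ((v t₀ - v 0) * t₀ ^ (-α))
      = (v t₀ - v 0) / (Real.Gamma (1 - α) * t₀ ^ α) := by
    rw [Real.rpow_neg ht₀.le]
    have hp : (0:ℝ) < t₀ ^ α := Real.rpow_pos_of_pos ht₀ α
    field_simp
  have h5 := mul_le_mul_of_nonneg_left hmain
    (by positivity : (0:ℝ) ≤ 1 / Real.Gamma (1 - α))
  linarith [heq ▸ h5]
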